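/- Let q be a prime power, m ≥ 2, and q' = q^m. Setting B = PG(1, q) ⊆ PG(1, q^m) and Orb_B = {gB : g ∈ PGL(2, q^m)}, the pair (PG(1, q^m), Orb_B) is a Steiner system S(3, q+1, q^m+1): every 3-subset of PG(1, q^m) is contained in exactly one block gB. -/

import Mathlib

open scoped LinearAlgebra.Projectivization
open Projectivization

/-- The action of an invertible matrix on the projective line. -/
noncomputable def pact {K : Type*} [Field K] (g : GL (Fin 2) K) :
    ℙ K (Fin 2 → K) → ℙ K (Fin 2 → K) :=
  Projectivization.map
    (((Matrix.GeneralLinearGroup.toLin g).toLinearEquiv :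
        (Fin 2 → K) ≃ₗ[K] (Fin 2 → K)) : (Fin 2 → K) →ₗ[K] (Fin 2 → K))
    (Matrix.GeneralLinearGroup.toLin g).toLinearEquiv.injective

section K
variable {K : Type*} [Field K]

lemma mk_congr' {v w : Fin 2 → K} (hv : v ≠ 0) (hw : w ≠ 0) (h : v = w) :
    Projectivization.mk K v hv = Projectivization.mk K w hw := by subst h; rfl

lemma e0_ne : (![1,0] : Fin 2 → K) ≠ 0 := fun h => by simpa using congrFun h 0
lemma e1_ne : (![0,1] : Fin 2 → K) ≠ 0 := fun h => by simpa using congrFun h 1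
lemma e2_ne : (![1,1] : Fin 2 → K) ≠ 0 := fun h => by simpa using congrFun h 0

lemma pact_mk (g : GL (Fin 2) K) (v : Fin 2 → K) (hv : v ≠ 0) :
    pact g (Projectivization.mk K v hv) =
    Projectivization.mk K ((Matrix.GeneralLinearGroup.toLin g).toLinearEquiv v)
      ((Matrix.GeneralLinearGroup.toLin g).toLinearEquiv.map_ne_zero_iff.mpr hv) := rfl

lemma pact_mul (g h : GL (Fin 2) K) : pact (g * h) = pact g ∘ pact h := by
  funext p
  induction p using Projectivization.ind with
  | h v hv =>
    simp only [Function.comp_apply, pact_mk]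
    exact mk_congr' _ _ (by
      simp only [LinearMap.GeneralLinearGroup.coe_toLinearEquiv, Matrix.GeneralLinearGroup.toLin_apply, Units.val_mul,
        Matrix.mulVecLin_mul, LinearMap.comp_apply])

lemma pact_one : pact (1 : GL (Fin 2) K) = id := by
  funext p
  induction p using Projectivization.ind with
  | h v hv =>
    simp only [pact_mk, id_eq]
    exact mk_congr' _ _ (by
      simp only [LinearMap.GeneralLinearGroup.coe_toLinearEquiv, Matrix.GeneralLinearGroup.toLin_apply, Units.val_one, Matrix.mulVecLin_one,
        LinearMap.id_apply])

lemma pact_left_inv (g : GL (Fin 2) K) (p : ℙ K (Fin 2 → K)) :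
    pact g⁻¹ (pact g p) = p := by
  rw [← Function.comp_apply (f := pact g⁻¹), ← pact_mul, inv_mul_cancel, pact_one, id_eq]

lemma pact_bijective (g : GL (Fin 2) K) : Function.Bijective (pact g) :=
  ⟨Function.LeftInverse.injective (pact_left_inv g),
   Function.RightInverse.surjective (g := pact g⁻¹) (fun p => by
     simpa using pact_left_inv g⁻¹ p)⟩

end K

section K2
variable {K : Type*} [Field K]

lemma indep_of_ne {u w : Fin 2 → K} (hu : u ≠ 0) (hw : w ≠ 0)
    (h : Projectivization.mk K u hu ≠ Projectivization.mk K w hw) :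
    LinearIndependent K ![u, w] := by
  rw [LinearIndependent.pair_iff' hu]
  intro a ha
  apply h
  rw [Projectivization.mk_eq_mk_iff']
  have ha0 : a ≠ 0 := by rintro rfl; rw [zero_smul] at ha; exact hw ha.symm
  exact ⟨a⁻¹, by rw [← ha, smul_smul, inv_mul_cancel₀ ha0, one_smul]⟩

lemma card_eq_finrank2 : Fintype.card (Fin 2) = Module.finrank K (Fin 2 → K) := by
  simp [Module.finrank_fin_fun]

lemma exists_frame (x y z : ℙ K (Fin 2 → K)) (hxy : x ≠ y) (hxz : x ≠ z) (hyz : y ≠ z) :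
    ∃ g : GL (Fin 2) K,
      pact g (Projectivization.mk K ![1,0] e0_ne) = x ∧
      pact g (Projectivization.mk K ![0,1] e1_ne) = y ∧
      pact g (Projectivization.mk K ![1,1] e2_ne) = z := by
  have li : LinearIndependent K ![x.rep, y.rep] :=
    indep_of_ne x.rep_nonzero y.rep_nonzero (by rw [Projectivization.mk_rep, Projectivization.mk_rep]; exact hxy)
  set u := x.rep with hu
  set w := y.rep with hw
  let B := basisOfLinearIndependentOfCardEqFinrank li card_eq_finrank2
  have hB : ⇑B = ![u, w] := coe_basisOfLinearIndependentOfCardEqFinrank li card_eq_finrank2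
  set a := B.repr z.rep 0 with ha
  set b := B.repr z.rep 1 with hb
  have hz : z.rep = a • u + b • w := by
    conv_lhs => rw [← B.sum_repr z.rep]
    rw [Fin.sum_univ_two, hB]
    simp
    rfl
  have ha0 : a ≠ 0 := by
    intro h0
    refine hyz (show z = y from ?_).symm
    rw [← Projectivization.mk_rep z, ← Projectivization.mk_rep y, Projectivization.mk_eq_mk_iff']
    exact ⟨b, by rw [hz, h0, zero_smul, zero_add]⟩
  have hb0 : b ≠ 0 := by
    intro h0
    refine hxz (show z = x from ?_).symm
    rw [← Projectivization.mk_rep z, ← Projectivization.mk_rep x, Projectivization.mk_eq_mk_iff']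
    exact ⟨a, by rw [hz, h0, zero_smul, add_zero]⟩
  have li2 : LinearIndependent K ![a • u, b • w] := by
    rw [LinearIndependent.pair_iff]
    intro s t hst
    have := LinearIndependent.pair_iff.mp li (s * a) (t * b) (by
      rw [mul_smul, mul_smul]; exact hst)
    exact ⟨by
      rcases this with ⟨h1, _⟩
      exact (mul_eq_zero.mp h1).resolve_right ha0, by
      rcases this with ⟨_, h2⟩
      exact (mul_eq_zero.mp h2).resolve_right hb0⟩
  let B2 := basisOfLinearIndependentOfCardEqFinrank li2 card_eq_finrank2
  have hB2 : ⇑B2 = ![a • u, b • w] := coe_basisOfLinearIndependentOfCardEqFinrank li2 card_eq_finrank2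
  let E : (Fin 2 → K) ≃ₗ[K] (Fin 2 → K) := (Pi.basisFun K (Fin 2)).equiv B2 (Equiv.refl _)
  refine ⟨Matrix.GeneralLinearGroup.toLin.symm (LinearMap.GeneralLinearGroup.ofLinearEquiv E), ?_⟩
  have hg : (Matrix.GeneralLinearGroup.toLin
      (Matrix.GeneralLinearGroup.toLin.symm (LinearMap.GeneralLinearGroup.ofLinearEquiv E))).toLinearEquiv = E := by
    rw [MulEquiv.apply_symm_apply]
    rfl
  have hbf0 : (Pi.basisFun K (Fin 2)) 0 = ![1,0] := by
    funext i; fin_cases i <;> simp [Pi.basisFun_apply]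
  have hbf1 : (Pi.basisFun K (Fin 2)) 1 = ![0,1] := by
    funext i; fin_cases i <;> simp [Pi.basisFun_apply]
  have hE0 : E ![1,0] = a • u := by
    rw [← hbf0]
    show (Pi.basisFun K (Fin 2)).equiv B2 (Equiv.refl _) _ = _
    rw [Module.Basis.equiv_apply, hB2]
    simp
  have hE1 : E ![0,1] = b • w := by
    rw [← hbf1]
    show (Pi.basisFun K (Fin 2)).equiv B2 (Equiv.refl _) _ = _
    rw [Module.Basis.equiv_apply, hB2]
    simp
  have hE2 : E ![1,1] = z.rep := by
    have h11 : (![1,1] : Fin 2 → K) = ![1,0] + ![0,1] := by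
      funext i; fin_cases i <;> simp
    rw [h11, map_add, hE0, hE1, hz]
  refine ⟨?_, ?_, ?_⟩
  · rw [pact_mk, hg]
    refine (mk_congr' _ (smul_ne_zero ha0 x.rep_nonzero) hE0).trans ?_
    conv_rhs => rw [← Projectivization.mk_rep x]
    exact (Projectivization.mk_eq_mk_iff' _ _ _ _ _).mpr ⟨a, rfl⟩
  · rw [pact_mk, hg]
    refine (mk_congr' _ (smul_ne_zero hb0 y.rep_nonzero) hE1).trans ?_
    conv_rhs => rw [← Projectivization.mk_rep y]
    exact (Projectivization.mk_eq_mk_iff' _ _ _ _ _).mpr ⟨b, rfl⟩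
  · rw [pact_mk, hg]
    exact (mk_congr' _ z.rep_nonzero hE2).trans (Projectivization.mk_rep z)

lemma pact_eq_id_of_fix_std {g : GL (Fin 2) K}
    (h0 : pact g (Projectivization.mk K ![1,0] e0_ne) = Projectivization.mk K ![1,0] e0_ne)
    (h1 : pact g (Projectivization.mk K ![0,1] e1_ne) = Projectivization.mk K ![0,1] e1_ne)
    (h2 : pact g (Projectivization.mk K ![1,1] e2_ne) = Projectivization.mk K ![1,1] e2_ne) :
    pact g = id := by
  set E := (Matrix.GeneralLinearGroup.toLin g).toLinearEquiv with hE
  rw [pact_mk, Projectivization.mk_eq_mk_iff'] at h0 h1 h2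
  obtain ⟨a, ha⟩ := h0
  obtain ⟨b, hb⟩ := h1
  obtain ⟨c, hc⟩ := h2
  have h11 : (![1,1] : Fin 2 → K) = ![1,0] + ![0,1] := by
    funext i; fin_cases i <;> simp
  have hsum : a • ![1,0] + b • ![0,1] = c • (![1,1] : Fin 2 → K) := by
    rw [ha, hb, hc, h11, map_add]
  have hac : a = c := by
    have := congrFun hsum 0
    simpa using this
  have hbc : b = c := by
    have := congrFun hsum 1
    simpa using this
  have ha0 : a ≠ 0 := by
    intro h
    apply e0_ne (K := K)
    have : E ![1,0] = 0 := by rw [← ha, h, zero_smul]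
    exact E.map_eq_zero_iff.mp this
  funext p
  induction p using Projectivization.ind with
  | h v hv =>
    rw [pact_mk, ← hE, id_eq]
    have hEv : E v = a • v := by
      have hv' : v = v 0 • ![1,0] + v 1 • ![0,1] := by
        funext i; fin_cases i <;> simp
      conv_lhs => rw [hv']
      rw [map_add, map_smul, map_smul, ← ha, ← hb, hbc, ← hac, smul_comm (v 0), smul_comm (v 1),
        ← smul_add, ← hv']
    refine (mk_congr' _ (smul_ne_zero ha0 hv) hEv).trans ?_
    exact (Projectivization.mk_eq_mk_iff' _ _ _ _ _).mpr ⟨a, rfl⟩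
end K2

/-- The sub-line `PG(1, q) ⊆ PG(1, qᵐ)`: the points of the projective line over `K`
admitting a representative with coordinates in the subfield `F`. -/
def subLine (F K : Type*) [Field F] [Field K] [Algebra F K] : Set (ℙ K (Fin 2 → K)) :=
  {x | ∃ (v : Fin 2 → F) (hv : (fun i => algebraMap F K (v i)) ≠ 0),
    x = Projectivization.mk K (fun i => algebraMap F K (v i)) hv}

section FK
variable (F K : Type*) [Field F] [Field K] [Algebra F K]

/-- Coordinatewise inclusion as a semilinear map. -/
def semInc : (Fin 2 → F) →ₛₗ[algebraMap F K] (Fin 2 → K) where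
  toFun v := fun i => algebraMap F K (v i)
  map_add' u v := by funext i; simp
  map_smul' c v := by funext i; simp [Algebra.smul_def]

lemma semInc_injective : Function.Injective (semInc F K) := by
  intro u v h
  funext i
  exact (algebraMap F K).injective (congrFun h i)

noncomputable def psi : ℙ F (Fin 2 → F) → ℙ K (Fin 2 → K) :=
  Projectivization.map (semInc F K) (semInc_injective F K)

lemma semInc_ne_zero {v : Fin 2 → F} (hv : v ≠ 0) : semInc F K v ≠ 0 := by
  intro h
  exact hv (semInc_injective F K (by rw [h]; exact (map_zero _).symm))

lemma psi_mk (v : Fin 2 → F) (hv : v ≠ 0) :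
    psi F K (Projectivization.mk F v hv) =
    Projectivization.mk K (semInc F K v) (semInc_ne_zero F K hv) := rfl

lemma subLine_eq_range : subLine F K = Set.range (psi F K) := by
  ext x
  constructor
  · rintro ⟨v, hv, rfl⟩
    have hv0 : v ≠ 0 := by
      intro h
      apply hv
      funext i
      simp [h]
    exact ⟨Projectivization.mk F v hv0, rfl⟩
  · rintro ⟨p, rfl⟩
    induction p using Projectivization.ind with
    | h v hv =>
      exact ⟨v, semInc_ne_zero F K hv, rfl⟩

lemma psi_injective : Function.Injective (psi F K) := by
  intro p q h
  induction p using Projectivization.ind with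
  | h v hv =>
  induction q using Projectivization.ind with
  | h w hw =>
    rw [psi_mk, psi_mk, Projectivization.mk_eq_mk_iff'] at h
    obtain ⟨a, ha⟩ := h
    obtain ⟨i, hi⟩ := Function.ne_iff.mp hw
    have hi' : w i ≠ 0 := hi
    set c := v i * (w i)⁻¹ with hc
    have hac : a = algebraMap F K c := by
      have := congrFun ha i
      simp only [Pi.smul_apply, smul_eq_mul] at this
      -- this : a * algebraMap F K (w i) = algebraMap F K (v i)
      have hwi : (algebraMap F K) (w i) ≠ 0 := by
        simpa using fun h => hi' ((algebraMap F K).injective (by simpa using h))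
      rw [hc, map_mul, map_inv₀]
      exact (eq_mul_inv_iff_mul_eq₀ hwi).mpr this
    rw [Projectivization.mk_eq_mk_iff']
    refine ⟨c, ?_⟩
    apply semInc_injective F K
    rw [(semInc F K).map_smulₛₗ, ← hac, ha]
end FK

section FK2
variable (F K : Type*) [Field F] [Field K] [Algebra F K]

/-- Embedding of `GL(2, F)` into `GL(2, K)`. -/
noncomputable def embGL : GL (Fin 2) F →* GL (Fin 2) K :=
  Units.map ((RingHom.mapMatrix (algebraMap F K) :
    Matrix (Fin 2) (Fin 2) F →+* Matrix (Fin 2) (Fin 2) K)).toMonoidHom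

lemma pact_embGL (k : GL (Fin 2) F) (p : ℙ F (Fin 2 → F)) :
    pact (embGL F K k) (psi F K p) = psi F K (pact k p) := by
  induction p using Projectivization.ind with
  | h v hv =>
    rw [psi_mk, pact_mk, pact_mk, psi_mk]
    refine mk_congr' _ _ ?_
    simp only [LinearMap.GeneralLinearGroup.coe_toLinearEquiv, Matrix.GeneralLinearGroup.toLin_apply, Matrix.mulVecLin_apply]
    funext i
    have : ((embGL F K k : GL (Fin 2) K) : Matrix (Fin 2) (Fin 2) K) =
        ((k : Matrix (Fin 2) (Fin 2) F)).map (algebraMap F K) := rfl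
    rw [this]
    exact (RingHom.map_mulVec (algebraMap F K) (k : Matrix (Fin 2) (Fin 2) F) v i).symm

lemma pact_embGL_image (k : GL (Fin 2) F) :
    pact (embGL F K k) '' subLine F K = subLine F K := by
  rw [subLine_eq_range, ← Set.range_comp]
  have hcomp : pact (embGL F K k) ∘ psi F K = psi F K ∘ pact k :=
    funext fun p => pact_embGL F K k p
  rw [hcomp, Set.range_comp, Set.range_eq_univ.mpr (pact_bijective k).surjective,
    Set.image_univ]

lemma std0_eq : psi F K (Projectivization.mk F ![1,0] e0_ne) = Projectivization.mk K ![1,0] e0_ne := by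
  rw [psi_mk]
  refine mk_congr' _ _ ?_
  funext i; fin_cases i <;> simp [semInc]

lemma std1_eq : psi F K (Projectivization.mk F ![0,1] e1_ne) = Projectivization.mk K ![0,1] e1_ne := by
  rw [psi_mk]
  refine mk_congr' _ _ ?_
  funext i; fin_cases i <;> simp [semInc]

lemma std2_eq : psi F K (Projectivization.mk F ![1,1] e2_ne) = Projectivization.mk K ![1,1] e2_ne := by
  rw [psi_mk]
  refine mk_congr' _ _ ?_
  funext i; fin_cases i <;> simp [semInc]

lemma std0_mem : Projectivization.mk K ![1,0] e0_ne ∈ subLine F K := by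
  rw [subLine_eq_range]
  exact ⟨_, std0_eq F K⟩

lemma std1_mem : Projectivization.mk K ![0,1] e1_ne ∈ subLine F K := by
  rw [subLine_eq_range]
  exact ⟨_, std1_eq F K⟩

lemma std2_mem : Projectivization.mk K ![1,1] e2_ne ∈ subLine F K := by
  rw [subLine_eq_range]
  exact ⟨_, std2_eq F K⟩

lemma exists_frame_sub {x y z : ℙ K (Fin 2 → K)}
    (hx : x ∈ subLine F K) (hy : y ∈ subLine F K) (hz : z ∈ subLine F K)
    (hxy : x ≠ y) (hxz : x ≠ z) (hyz : y ≠ z) :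
    ∃ k : GL (Fin 2) F,
      pact (embGL F K k) (Projectivization.mk K ![1,0] e0_ne) = x ∧
      pact (embGL F K k) (Projectivization.mk K ![0,1] e1_ne) = y ∧
      pact (embGL F K k) (Projectivization.mk K ![1,1] e2_ne) = z := by
  rw [subLine_eq_range] at hx hy hz
  obtain ⟨x', rfl⟩ := hx
  obtain ⟨y', rfl⟩ := hy
  obtain ⟨z', rfl⟩ := hz
  have hxy' : x' ≠ y' := fun h => hxy (by rw [h])
  have hxz' : x' ≠ z' := fun h => hxz (by rw [h])
  have hyz' : y' ≠ z' := fun h => hyz (by rw [h])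
  obtain ⟨k, hk0, hk1, hk2⟩ := exists_frame x' y' z' hxy' hxz' hyz'
  exact ⟨k, by rw [← std0_eq F K, pact_embGL, hk0], by rw [← std1_eq F K, pact_embGL, hk1],
    by rw [← std2_eq F K, pact_embGL, hk2]⟩

lemma block_unique (h : GL (Fin 2) K) {x y z : ℙ K (Fin 2 → K)}
    (hxy : x ≠ y) (hxz : x ≠ z) (hyz : y ≠ z)
    (hxB : x ∈ subLine F K) (hyB : y ∈ subLine F K) (hzB : z ∈ subLine F K)
    (hxh : x ∈ pact h '' subLine F K) (hyh : y ∈ pact h '' subLine F K)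
    (hzh : z ∈ pact h '' subLine F K) :
    pact h '' subLine F K = subLine F K := by
  obtain ⟨x', hx'B, hx'⟩ := hxh
  obtain ⟨y', hy'B, hy'⟩ := hyh
  obtain ⟨z', hz'B, hz'⟩ := hzh
  have hinj := (pact_bijective h).injective
  have hxy' : x' ≠ y' := fun he => hxy (by rw [← hx', ← hy', he])
  have hxz' : x' ≠ z' := fun he => hxz (by rw [← hx', ← hz', he])
  have hyz' : y' ≠ z' := fun he => hyz (by rw [← hy', ← hz', he])
  obtain ⟨k₁, hk10, hk11, hk12⟩ := exists_frame_sub F K hx'B hy'B hz'B hxy' hxz' hyz'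
  obtain ⟨k₂, hk20, hk21, hk22⟩ := exists_frame_sub F K hxB hyB hzB hxy hxz hyz
  set g0 := (embGL F K k₂)⁻¹ * (h * embGL F K k₁) with hg0
  have hcomp : pact g0 = pact (embGL F K k₂)⁻¹ ∘ (pact h ∘ pact (embGL F K k₁)) := by
    rw [hg0, pact_mul, pact_mul]
  have fix0 : pact g0 (Projectivization.mk K ![1,0] e0_ne) = Projectivization.mk K ![1,0] e0_ne := by
    rw [hcomp]
    simp only [Function.comp_apply, hk10, hx']
    rw [← hk20, pact_left_inv]
  have fix1 : pact g0 (Projectivization.mk K ![0,1] e1_ne) = Projectivization.mk K ![0,1] e1_ne := by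
    rw [hcomp]
    simp only [Function.comp_apply, hk11, hy']
    rw [← hk21, pact_left_inv]
  have fix2 : pact g0 (Projectivization.mk K ![1,1] e2_ne) = Projectivization.mk K ![1,1] e2_ne := by
    rw [hcomp]
    simp only [Function.comp_apply, hk12, hz']
    rw [← hk22, pact_left_inv]
  have hid : pact g0 = id := pact_eq_id_of_fix_std fix0 fix1 fix2
  have key : embGL F K k₂ * g0 = h * embGL F K k₁ := by
    rw [hg0, mul_inv_cancel_left]
  calc pact h '' subLine F K
      = pact h '' (pact (embGL F K k₁) '' subLine F K) := by rw [pact_embGL_image]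
    _ = pact (h * embGL F K k₁) '' subLine F K := by rw [pact_mul, Set.image_comp]
    _ = pact (embGL F K k₂ * g0) '' subLine F K := by rw [key]
    _ = pact (embGL F K k₂) '' (pact g0 '' subLine F K) := by rw [pact_mul, Set.image_comp]
    _ = pact (embGL F K k₂) '' subLine F K := by rw [hid, Set.image_id]
    _ = subLine F K := pact_embGL_image F K k₂

end FK2

section Std
variable {K : Type*} [Field K]

lemma std01_ne : Projectivization.mk K (![1,0] : Fin 2 → K) e0_ne ≠ Projectivization.mk K (![0,1] : Fin 2 → K) e1_ne := by
  intro h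
  rw [Projectivization.mk_eq_mk_iff'] at h
  obtain ⟨a, ha⟩ := h
  simpa using congrFun ha 0

lemma std02_ne : Projectivization.mk K (![1,0] : Fin 2 → K) e0_ne ≠ Projectivization.mk K (![1,1] : Fin 2 → K) e2_ne := by
  intro h
  rw [Projectivization.mk_eq_mk_iff'] at h
  obtain ⟨a, ha⟩ := h
  have h1 := congrFun ha 1
  have h0 := congrFun ha 0
  simp at h1 h0
  rw [h1] at h0
  simp at h0

lemma std12_ne : Projectivization.mk K (![0,1] : Fin 2 → K) e1_ne ≠ Projectivization.mk K (![1,1] : Fin 2 → K) e2_ne := by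
  intro h
  rw [Projectivization.mk_eq_mk_iff'] at h
  obtain ⟨a, ha⟩ := h
  have h0 := congrFun ha 0
  have h1 := congrFun ha 1
  simp at h0 h1
  rw [h0] at h1
  simp at h1

end Std

theorem stmt_19 (q m : ℕ) (hq : IsPrimePow q) (hm : 2 ≤ m)
    (F K : Type*) [Field F] [Fintype F] [Field K] [Fintype K] [Algebra F K]
    (hF : Fintype.card F = q) (hK : Fintype.card K = q ^ m)
    (t : Finset (ℙ K (Fin 2 → K))) (ht : t.card = 3) :
    ∃! S : Set (ℙ K (Fin 2 → K)),
      (∃ g : GL (Fin 2) K, S = pact g '' subLine F K) ∧ ↑t ⊆ S := by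
  classical
  obtain ⟨x, y, z, hxy, hxz, hyz, rfl⟩ := Finset.card_eq_three.mp ht
  obtain ⟨g, hg0, hg1, hg2⟩ := exists_frame x y z hxy hxz hyz
  refine ⟨pact g '' subLine F K, ⟨⟨g, rfl⟩, ?_⟩, ?_⟩
  · intro p hp
    simp only [Finset.coe_insert, Finset.coe_singleton, Set.mem_insert_iff,
      Set.mem_singleton_iff] at hp
    rcases hp with rfl | rfl | rfl
    · exact ⟨_, std0_mem F K, hg0⟩
    · exact ⟨_, std1_mem F K, hg1⟩
    · exact ⟨_, std2_mem F K, hg2⟩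
  · rintro S ⟨⟨g', rfl⟩, hsub⟩
    have hx' : x ∈ pact g' '' subLine F K := hsub (by simp)
    have hy' : y ∈ pact g' '' subLine F K := hsub (by simp)
    have hz' : z ∈ pact g' '' subLine F K := hsub (by simp)
    set h := g⁻¹ * g' with hh
    have hinj := (pact_bijective (g := g⁻¹)).injective
    -- the three transported points
    have hgx : pact g⁻¹ x = Projectivization.mk K ![1,0] e0_ne := by rw [← hg0, pact_left_inv]
    have hgy : pact g⁻¹ y = Projectivization.mk K ![0,1] e1_ne := by rw [← hg1, pact_left_inv]
    have hgz : pact g⁻¹ z = Projectivization.mk K ![1,1] e2_ne := by rw [← hg2, pact_left_inv]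
    have htrans : ∀ p ∈ pact g' '' subLine F K, pact g⁻¹ p ∈ pact h '' subLine F K := by
      rintro p ⟨b, hb, rfl⟩
      refine ⟨b, hb, ?_⟩
      rw [hh, pact_mul, Function.comp_apply]
    have hB : pact h '' subLine F K = subLine F K := by
      refine block_unique F K h (x := pact g⁻¹ x) (y := pact g⁻¹ y) (z := pact g⁻¹ z)
        (fun he => hxy (hinj he)) (fun he => hxz (hinj he)) (fun he => hyz (hinj he))
        ?_ ?_ ?_ (htrans x hx') (htrans y hy') (htrans z hz')
      · rw [hgx]; exact std0_mem F K
      · rw [hgy]; exact std1_mem F K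
      · rw [hgz]; exact std2_mem F K
    have : pact g '' (pact h '' subLine F K) = pact g' '' subLine F K := by
      rw [← Set.image_comp, ← pact_mul, hh, mul_inv_cancel_left]
    rw [← this, hB]
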